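/- Let M > σ' > 0, Ω > 0, and y ∈ [-π/(2Ω), π/(2Ω)]. If there exist a ∈ ℂ and z ∈ [-π/(2Ω), π/(2Ω)] such that |a e^{izω} - M e^{iyω}| < σ' for both ω = -Ω and ω = 0, then |z - y| < (π/Ω)(σ'/M). -/

import Mathlib

open Real Complex

lemma abs_exp_sub_exp (s t : ℝ) :
    ‖Complex.exp (Complex.I * s) - Complex.exp (Complex.I * t)‖
      = 2 * |Real.sin ((s - t) / 2)| := by
  have hs : Complex.I * (s : ℂ) = (s : ℂ) * Complex.I := by ring
  have ht : Complex.I * (t : ℂ) = (t : ℂ) * Complex.I := by ring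
  rw [hs, ht, Complex.norm_def, Complex.normSq_apply]
  simp only [Complex.sub_re, Complex.sub_im, Complex.exp_ofReal_mul_I_re,
    Complex.exp_ofReal_mul_I_im]
  have h2 : (2 : ℝ) * |Real.sin ((s - t) / 2)| = Real.sqrt ((2 * Real.sin ((s - t) / 2)) ^ 2) := by
    rw [Real.sqrt_sq_eq_abs, abs_mul]
    norm_num
  rw [h2]
  congr 1
  have hst : s - t = 2 * ((s - t) / 2) := by ring
  have hc : Real.cos (s - t) = 2 * Real.cos ((s - t) / 2) ^ 2 - 1 := by
    have := Real.cos_two_mul ((s - t) / 2)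
    rwa [show 2 * ((s - t) / 2) = s - t by ring] at this
  have h1 := Real.sin_sq_add_cos_sq ((s - t) / 2)
  have hcs := Real.cos_sub s t
  rw [hc] at hcs
  nlinarith [Real.sin_sq_add_cos_sq s, Real.sin_sq_add_cos_sq t]

theorem stmt_13 (M σ' Ω : ℝ) (hσ' : 0 < σ') (hσ'M : σ' < M) (hΩ : 0 < Ω)
    (y : ℝ) (hy : y ∈ Set.Icc (-(π / (2 * Ω))) (π / (2 * Ω)))
    (a : ℂ) (z : ℝ) (hz : z ∈ Set.Icc (-(π / (2 * Ω))) (π / (2 * Ω)))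
    (h1 : ‖a * Complex.exp (Complex.I * (z * (-Ω)))
      - M * Complex.exp (Complex.I * (y * (-Ω)))‖ < σ')
    (h2 : ‖a - M‖ < σ') :
    |z - y| < (π / Ω) * (σ' / M) := by
  obtain ⟨hy1, hy2⟩ := hy
  obtain ⟨hz1, hz2⟩ := hz
  set e1 : ℂ := Complex.exp (Complex.I * (z * (-Ω)))
  set e2 : ℂ := Complex.exp (Complex.I * (y * (-Ω)))
  have he1 : ‖e1‖ = 1 := by
    have h : Complex.I * ((z : ℂ) * -(Ω : ℂ)) = ((z * -Ω : ℝ) : ℂ) * Complex.I := by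
      push_cast; ring
    rw [show e1 = Complex.exp (Complex.I * ((z : ℂ) * -(Ω : ℂ))) from rfl, h,
      Complex.norm_exp_ofReal_mul_I]
  -- bound on M * |e1 - e2|
  have key : M * ‖e1 - e2‖ < 2 * σ' := by
    have hdecomp : (M : ℂ) * (e1 - e2) = (a * e1 - M * e2) - (a - M) * e1 := by ring
    have hb : ‖(M : ℂ) * (e1 - e2)‖ < 2 * σ' := by
      rw [hdecomp]
      calc ‖(a * e1 - M * e2) - (a - M) * e1‖
          ≤ ‖a * e1 - M * e2‖ + ‖(a - M) * e1‖ :=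
            norm_sub_le _ _
        _ < σ' + σ' := by
            rw [norm_mul, he1, mul_one]
            exact add_lt_add h1 h2
        _ = 2 * σ' := by ring
    rwa [norm_mul, Complex.norm_real, Real.norm_eq_abs, abs_of_pos (hσ'.trans hσ'M)] at hb
  have habs : ‖e1 - e2‖ = 2 * |Real.sin ((z * (-Ω) - y * (-Ω)) / 2)| := by
    have := abs_exp_sub_exp (z * (-Ω)) (y * (-Ω))
    push_cast at this ⊢
    exact this
  have hu : (z * (-Ω) - y * (-Ω)) / 2 = -(Ω * (z - y) / 2) := by ring
  rw [habs, hu, Real.sin_neg, abs_neg] at key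
  set u : ℝ := Ω * (z - y) / 2 with hudef
  have huabs : |u| = Ω * |z - y| / 2 := by
    rw [hudef, abs_div, abs_mul, abs_of_pos hΩ]
    norm_num
  have hzy : |z - y| ≤ π / Ω := by
    rw [abs_sub_le_iff]
    constructor <;> [skip; skip] <;>
    · have : π / (2 * Ω) + π / (2 * Ω) = π / Ω := by field_simp; ring
      linarith
  have hule : |u| ≤ π / 2 := by
    rw [huabs]
    rw [le_div_iff₀ (by positivity : (0:ℝ) < Ω)] at hzy
    linarith
  have hjordan : 2 / π * |u| ≤ |Real.sin u| := Real.mul_abs_le_abs_sin hule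
  have hπ : (0:ℝ) < π := Real.pi_pos
  have hM : (0:ℝ) < M := hσ'.trans hσ'M
  have : M * (2 * (2 / π * |u|)) < 2 * σ' := by
    calc M * (2 * (2 / π * |u|)) ≤ M * (2 * |Real.sin u|) := by nlinarith
      _ < 2 * σ' := key
  rw [huabs] at this
  have h6 : M * Ω * |z - y| < π * σ' := by
    have h5 : M * (2 * (2 / π * (Ω * |z - y| / 2))) = 2 * (M * Ω * |z - y|) / π := by
      field_simp
    rw [h5, div_lt_iff₀ hπ] at this
    linarith
  rw [show π / Ω * (σ' / M) = π * σ' / (Ω * M) from div_mul_div_comm π Ω σ' M,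
    lt_div_iff₀ (by positivity)]
  nlinarith
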